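/- Suppose f is convex and L-smooth on a convex compact set S of diameter D, and consider one outer cycle of PolyCD with 1D gradient steps: for k = 1,…,M, x^k = x^{k-1} + α_k(v^k - x^{k-1}) with α_k ∈ argmin_{α∈[0,1]}{α⟨∇f(x^{k-1}), v^k - x^{k-1}⟩ + (Lα²/2)‖v^k - x^{k-1}‖²}. Then (f(x^M) - f*)² ≤ 8MLD²(f(x^0) - f(x^M)). -/

import Mathlib

open scoped RealInnerProductSpace

section Aux

variable {E : Type*} [NormedAddCommGroup E] [InnerProductSpace ℝ E] [CompleteSpace E]

lemma grad_ineq' {S : Set E} {f : E → ℝ} (hf : ConvexOn ℝ S f)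
    {y z : E} (hy : y ∈ S) (hz : z ∈ S) {G : E} (hg : HasGradientAt f G y) :
    f y + ⟪G, z - y⟫ ≤ f z := by
  have hφ : HasDerivAt (fun t : ℝ => f (y + t • (z - y))) ⟪G, z - y⟫ 0 := by
    have hline : HasDerivAt (fun t : ℝ => y + t • (z - y)) (z - y) 0 := by
      simpa using ((hasDerivAt_id (0:ℝ)).smul_const (z - y)).const_add y
    have hfd : HasFDerivAt f ((InnerProductSpace.toDual ℝ E) G) (y + (0:ℝ) • (z - y)) := by
      simpa using hg.hasFDerivAt
    have := hfd.comp_hasDerivAt 0 hline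
    simpa [InnerProductSpace.toDual_apply_apply, Function.comp_def] using this
  haveI : (nhdsWithin (0:ℝ) (Set.Ioc (0:ℝ) 1)).NeBot :=
    left_nhdsWithin_Ioc_neBot (by norm_num)
  have htend : Filter.Tendsto (slope (fun t : ℝ => f (y + t • (z - y))) 0)
      (nhdsWithin 0 (Set.Ioc (0:ℝ) 1)) (nhds ⟪G, z - y⟫) := by
    refine (hasDerivAt_iff_tendsto_slope.1 hφ).mono_left (nhdsWithin_mono _ ?_)
    intro t ht
    exact ne_of_gt ht.1
  have hle : ⟪G, z - y⟫ ≤ f z - f y := by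
    refine le_of_tendsto htend ?_
    filter_upwards [self_mem_nhdsWithin] with t ht
    have h1 : y + t • (z - y) = (1 - t) • y + t • z := by
      rw [smul_sub]; module
    have h2 : f (y + t • (z - y)) ≤ (1 - t) * f y + t * f z := by
      rw [h1]
      exact hf.2 hy hz (by linarith [ht.2]) (le_of_lt ht.1) (by ring)
    have h3 : slope (fun t : ℝ => f (y + t • (z - y))) 0 t
        = (f (y + t • (z - y)) - f (y + (0:ℝ) • (z - y))) / t := by
      simp [slope_def_field]
    rw [h3]
    simp only [zero_smul, add_zero]
    rw [div_le_iff₀ ht.1]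
    nlinarith [h2]
  linarith

lemma mvt_seg' {S : Set E} (hS : Convex ℝ S) {f : E → ℝ} {g : E → E} {L : ℝ} (hL0 : 0 ≤ L)
    (hg : ∀ y ∈ S, HasGradientAt f (g y) y)
    (hlip : ∀ a ∈ S, ∀ b ∈ S, ‖g a - g b‖ ≤ L * ‖a - b‖)
    {a b : E} (ha : a ∈ S) (hb : b ∈ S) :
    f b - f a - ⟪g a, b - a⟫ ≤ L * ‖b - a‖ ^ 2 := by
  have hseg : segment ℝ a b ⊆ S := hS.segment_subset ha hb
  have hbound : ∀ z ∈ segment ℝ a b,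
      ‖(InnerProductSpace.toDual ℝ E) (g z) - (InnerProductSpace.toDual ℝ E) (g a)‖
        ≤ L * ‖b - a‖ := by
    intro z hz
    rw [← map_sub, (InnerProductSpace.toDual ℝ E).norm_map]
    refine le_trans (hlip z (hseg hz) a ha) ?_
    obtain ⟨u, w, hu, hw, huw, rfl⟩ := hz
    have : u • a + w • b - a = w • (b - a) := by
      have : u = 1 - w := by linarith
      rw [this]; module
    rw [this, norm_smul]
    have : |w| * ‖b - a‖ ≤ 1 * ‖b - a‖ := by
      apply mul_le_mul_of_nonneg_right _ (norm_nonneg _)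
      rw [abs_of_nonneg hw]; linarith
    calc L * (‖w‖ * ‖b - a‖) ≤ L * (1 * ‖b - a‖) := by
          apply mul_le_mul_of_nonneg_left _ hL0
          simpa [Real.norm_eq_abs] using this
      _ = L * ‖b - a‖ := by ring
  have := (convex_segment a b).norm_image_sub_le_of_norm_hasFDerivWithin_le'
    (f' := fun z => (InnerProductSpace.toDual ℝ E) (g z)) (φ := (InnerProductSpace.toDual ℝ E) (g a))
    (fun z hz => (hg z (hseg hz)).hasFDerivAt.hasFDerivWithinAt)
    hbound (left_mem_segment ℝ a b) (right_mem_segment ℝ a b)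
  have h2 : f b - f a - ⟪g a, b - a⟫ ≤ |f b - f a - ⟪g a, b - a⟫| := le_abs_self _
  calc f b - f a - ⟪g a, b - a⟫ ≤ ‖f b - f a - (InnerProductSpace.toDual ℝ E) (g a) (b - a)‖ := by
        simpa [InnerProductSpace.toDual_apply_apply, Real.norm_eq_abs] using h2
    _ ≤ L * ‖b - a‖ * ‖b - a‖ := this
    _ = L * ‖b - a‖ ^ 2 := by ring

lemma descent_lem' {S : Set E} (hS : Convex ℝ S) {f : E → ℝ} {g : E → E} {L : ℝ} (hL0 : 0 ≤ L)
    (hg : ∀ y ∈ S, HasGradientAt f (g y) y)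
    (hlip : ∀ a ∈ S, ∀ b ∈ S, ‖g a - g b‖ ≤ L * ‖a - b‖)
    {x y : E} (hx : x ∈ S) (hy : y ∈ S) :
    f y ≤ f x + ⟪g x, y - x⟫ + L / 2 * ‖y - x‖ ^ 2 := by
  have main : ∀ n : ℕ, 1 ≤ n →
      f y ≤ f x + ⟪g x, y - x⟫ + L / 2 * ‖y - x‖ ^ 2 + L * ‖y - x‖ ^ 2 / n := by
    intro n hn
    have hn0 : (0:ℝ) < n := by exact_mod_cast hn
    set p : ℕ → E := fun j => x + ((j : ℝ) / n) • (y - x) with hp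
    have hpS : ∀ j, j ≤ n → p j ∈ S := by
      intro j hj
      refine hS.add_smul_sub_mem hx hy ⟨?_, ?_⟩
      · positivity
      · rw [div_le_one hn0]; exact_mod_cast hj
    have hstep : ∀ j, j < n → f (p (j+1)) - f (p j) ≤
        ⟪g x, y - x⟫ / n + L * ‖y - x‖ ^ 2 * j / n ^ 2 + L * ‖y - x‖ ^ 2 / n ^ 2 := by
      intro j hj
      have hdiff : p (j+1) - p j = (1 / (n:ℝ)) • (y - x) := by
        simp only [hp]
        rw [show ((j+1:ℕ):ℝ)/(n:ℝ) = (j:ℝ)/n + 1/n by push_cast; field_simp, add_smul]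
        abel
      have hnd : ‖p (j+1) - p j‖ = ‖y - x‖ / n := by
        rw [hdiff, norm_smul]
        simp [abs_of_nonneg (le_of_lt (by positivity : (0:ℝ) < 1/(n:ℝ)))]
        ring
      have h1 : f (p (j+1)) - f (p j) - ⟪g (p j), p (j+1) - p j⟫ ≤ L * ‖p (j+1) - p j‖ ^ 2 :=
        mvt_seg' hS hL0 hg hlip (hpS j (le_of_lt hj)) (hpS (j+1) hj)
      have h2 : ⟪g (p j), p (j+1) - p j⟫ ≤ ⟪g x, y - x⟫ / n + L * ‖y - x‖ ^ 2 * j / n ^ 2 := by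
        have hgg : g x + (g (p j) - g x) = g (p j) := by abel
        have hsplit : ⟪g (p j), p (j+1) - p j⟫
            = ⟪g x, p (j+1) - p j⟫ + ⟪g (p j) - g x, p (j+1) - p j⟫ := by
          rw [← inner_add_left, hgg]
        have hA : ⟪g x, p (j+1) - p j⟫ = ⟪g x, y - x⟫ / n := by
          rw [hdiff, real_inner_smul_right]; ring
        have hB : ⟪g (p j) - g x, p (j+1) - p j⟫ ≤ L * ‖y - x‖ ^ 2 * j / n ^ 2 := by
          refine le_trans (real_inner_le_norm _ _) ?_
          have hgp : ‖g (p j) - g x‖ ≤ L * (j / n * ‖y - x‖) := by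
            refine le_trans (hlip _ (hpS j (le_of_lt hj)) _ hx) ?_
            have : ‖p j - x‖ = j / n * ‖y - x‖ := by
              simp only [hp, add_sub_cancel_left, norm_smul]
              simp [abs_of_nonneg (by positivity : (0:ℝ) ≤ (j:ℝ)/n)]
            rw [this]
          rw [hnd]
          calc ‖g (p j) - g x‖ * (‖y - x‖ / n) ≤ (L * (j / n * ‖y - x‖)) * (‖y - x‖ / n) := by
                apply mul_le_mul_of_nonneg_right hgp (by positivity)
            _ = L * ‖y - x‖ ^ 2 * j / n ^ 2 := by ring
        rw [hsplit, hA]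
        linarith
      have h3 : L * ‖p (j+1) - p j‖ ^ 2 = L * ‖y - x‖ ^ 2 / n ^ 2 := by
        rw [hnd]; ring
      linarith [h1, h2]
    have htel : f (p n) - f (p 0) = ∑ j ∈ Finset.range n, (f (p (j+1)) - f (p j)) :=
      (Finset.sum_range_sub (fun j => f (p j)) n).symm
    have hsum : f (p n) - f (p 0) ≤
        ∑ j ∈ Finset.range n, (⟪g x, y - x⟫ / n + L * ‖y - x‖ ^ 2 * j / n ^ 2
          + L * ‖y - x‖ ^ 2 / n ^ 2) := by
      rw [htel]
      exact Finset.sum_le_sum (fun j hj => hstep j (Finset.mem_range.1 hj))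
    have hgauss : (∑ j ∈ Finset.range n, (j:ℝ)) ≤ (n:ℝ) ^ 2 / 2 := by
      have := Finset.sum_range_id_mul_two n
      have hc : (∑ j ∈ Finset.range n, (j:ℝ)) * 2 = ((n * (n-1) : ℕ) : ℝ) := by
        rw [← this]; push_cast; ring
      have hle : ((n * (n-1):ℕ):ℝ) ≤ (n:ℝ)^2 := by
        have : (n * (n-1):ℕ) ≤ n * n := Nat.mul_le_mul_left n (Nat.sub_le n 1)
        calc ((n * (n-1):ℕ):ℝ) ≤ ((n*n : ℕ):ℝ) := by exact_mod_cast this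
          _ = (n:ℝ)^2 := by push_cast; ring
      linarith
    have hsum2 : ∑ j ∈ Finset.range n, (⟪g x, y - x⟫ / n + L * ‖y - x‖ ^ 2 * j / n ^ 2
          + L * ‖y - x‖ ^ 2 / n ^ 2)
        ≤ ⟪g x, y - x⟫ + L / 2 * ‖y - x‖ ^ 2 + L * ‖y - x‖ ^ 2 / n := by
      rw [Finset.sum_add_distrib, Finset.sum_add_distrib, Finset.sum_const, Finset.sum_const]
      have e1 : (Finset.range n).card • (⟪g x, y - x⟫ / n) = ⟪g x, y - x⟫ := by
        simp only [Finset.card_range, nsmul_eq_mul]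
        field_simp
      have e2 : ∑ j ∈ Finset.range n, L * ‖y - x‖ ^ 2 * (j:ℝ) / n ^ 2
          ≤ L / 2 * ‖y - x‖ ^ 2 := by
        have : ∑ j ∈ Finset.range n, L * ‖y - x‖ ^ 2 * (j:ℝ) / n ^ 2
            = L * ‖y - x‖ ^ 2 / n ^ 2 * (∑ j ∈ Finset.range n, (j:ℝ)) := by
          rw [Finset.mul_sum]; apply Finset.sum_congr rfl; intro j _; ring
        rw [this]
        calc L * ‖y - x‖ ^ 2 / n ^ 2 * (∑ j ∈ Finset.range n, (j:ℝ))
            ≤ L * ‖y - x‖ ^ 2 / n ^ 2 * ((n:ℝ)^2/2) := by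
              apply mul_le_mul_of_nonneg_left hgauss (by positivity)
          _ = L / 2 * ‖y - x‖ ^ 2 := by field_simp
      have e3 : (Finset.range n).card • (L * ‖y - x‖ ^ 2 / n ^ 2) = L * ‖y - x‖ ^ 2 / n := by
        simp [Finset.card_range, nsmul_eq_mul]
        field_simp
      rw [e1, e3]
      linarith
    have hp0 : p 0 = x := by simp [hp]
    have hpn : p n = y := by
      simp only [hp]
      rw [div_self (ne_of_gt hn0)]
      simp
    rw [hp0, hpn] at hsum
    linarith
  refine le_of_forall_pos_le_add ?_
  intro ε hε
  obtain ⟨n, hn⟩ := exists_nat_gt (max 1 (L * ‖y - x‖ ^ 2 / ε))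
  have hn1 : 1 ≤ n := by
    have : (1:ℝ) ≤ max 1 (L * ‖y - x‖ ^ 2 / ε) := le_max_left _ _
    exact_mod_cast lt_of_le_of_lt this hn |>.le
  have hn0 : (0:ℝ) < n := by exact_mod_cast hn1
  have h2 : L * ‖y - x‖ ^ 2 / n ≤ ε := by
    have h3 : L * ‖y - x‖ ^ 2 / ε < n := lt_of_le_of_lt (le_max_right _ _) hn
    rw [div_le_iff₀ hn0]
    have := (div_lt_iff₀ hε).1 h3
    linarith
  linarith [main n hn1]

end Aux

lemma sqrt_step' {k A b : ℝ} (hk : 0 ≤ k) (hA : 0 ≤ A) (hb : 0 ≤ b) :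
    Real.sqrt (k * A) + Real.sqrt b ≤ Real.sqrt ((k + 1) * (A + b)) := by
  have h1 : (Real.sqrt (k * A) + Real.sqrt b) ^ 2 ≤ (k + 1) * (A + b) := by
    have e3 : Real.sqrt (k * A) * Real.sqrt b = Real.sqrt A * Real.sqrt (k * b) := by
      rw [Real.sqrt_mul hk, Real.sqrt_mul hk]; ring
    nlinarith [Real.sq_sqrt hA, Real.sq_sqrt hb, Real.sq_sqrt (mul_nonneg hk hb),
      Real.sq_sqrt (mul_nonneg hk hA), Real.sqrt_nonneg A, Real.sqrt_nonneg (k * b),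
      sq_nonneg (Real.sqrt A - Real.sqrt (k * b)), e3]
  exact Real.le_sqrt_of_sq_le h1

set_option maxHeartbeats 1000000 in
lemma quad_facts' {G h L a f0 f1 D : ℝ} (hL : 0 < L) (hD0 : 0 ≤ D) (hh : 0 ≤ h) (hhD : h ≤ D ^ 2)
    (hG0 : h = 0 → G = 0)
    (ha : a ∈ Set.Icc (0:ℝ) 1)
    (hopt : ∀ β ∈ Set.Icc (0:ℝ) 1, a * G + L * a ^ 2 / 2 * h ≤ β * G + L * β ^ 2 / 2 * h)
    (hdesc : f1 ≤ f0 + a * G + L / 2 * (a ^ 2 * h)) :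
    f1 ≤ f0 ∧ L / 2 * (a ^ 2 * h) ≤ f0 - f1 ∧
      -G ≤ (f0 - f1) + Real.sqrt (2 * L * (f0 - f1)) * D := by
  obtain ⟨ha0, ha1⟩ := ha
  have hkey : a * G + L * a ^ 2 * h ≤ 0 := by
    obtain ⟨c, hc⟩ : ∃ c, L * a ^ 2 / 2 * h = c := ⟨_, rfl⟩
    have hc0 : 0 ≤ c := hc ▸ by positivity
    have ht : ∀ t : ℝ, 0 ≤ t → t < 1 → a * G ≤ -(1 + t) * c := by
      intro t ht0 ht1
      have hmem : t * a ∈ Set.Icc (0:ℝ) 1 := ⟨by positivity, by nlinarith⟩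
      have h2 := hopt (t * a) hmem
      have e : L * (t * a) ^ 2 / 2 * h = t ^ 2 * c := by rw [← hc]; ring
      rw [hc, e] at h2
      nlinarith [h2, show (0:ℝ) < 1 - t by linarith, hc0]
    by_contra hpos
    push_neg at hpos
    have h2c : L * a ^ 2 * h = 2 * c := by rw [← hc]; ring
    rw [h2c] at hpos
    have h0 := ht 0 le_rfl one_pos
    have hcpos : 0 < c := by linarith
    have hu1 : 1 ≤ -(a * G) / c := by rw [le_div_iff₀ hcpos]; linarith
    have hu2 : -(a * G) / c < 2 := by rw [div_lt_iff₀ hcpos]; linarith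
    have hmid := ht (-(a * G) / c / 2) (by linarith) (by linarith)
    have hid : -(a * G) / c * c = -(a * G) := div_mul_cancel₀ _ (ne_of_gt hcpos)
    nlinarith [hmid, hid, hcpos, hu1, hu2]
  have hLh : 0 ≤ L * (a ^ 2 * h) := by positivity
  have c1 : f1 ≤ f0 := by nlinarith
  have c2 : L / 2 * (a ^ 2 * h) ≤ f0 - f1 := by nlinarith
  refine ⟨c1, c2, ?_⟩
  have hδ0 : 0 ≤ f0 - f1 := by linarith
  have hsqarg : (0:ℝ) ≤ 2 * L * (f0 - f1) := by
    have : (0:ℝ) ≤ 2 * L := by linarith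
    exact mul_nonneg this hδ0
  have hsq0 : 0 ≤ Real.sqrt (2 * L * (f0 - f1)) * D := mul_nonneg (Real.sqrt_nonneg _) hD0
  rcases le_or_gt (-G) 0 with hneg | hGpos
  · linarith
  have hhpos : 0 < h := by
    rcases hh.eq_or_lt with he | hlt
    · exact absurd (hG0 he.symm) (by intro h'; rw [h'] at hGpos; simp at hGpos)
    · exact hlt
  have hδq : ∀ β ∈ Set.Icc (0:ℝ) 1, -(β * G + L * β ^ 2 / 2 * h) ≤ f0 - f1 := by
    intro β hβ
    have := hopt β hβ
    nlinarith [hdesc]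
  rcases le_or_gt (-G) (L * h) with hA | hB
  · have hβmem : -G / (L * h) ∈ Set.Icc (0:ℝ) 1 := by
      constructor
      · apply div_nonneg (by linarith) (by positivity)
      · rw [div_le_one (by positivity)]; linarith
    have hval : -G / (L * h) * G + L * (-G / (L * h)) ^ 2 / 2 * h = -(G ^ 2 / (2 * L * h)) := by
      field_simp
      ring
    have hG2 : G ^ 2 / (2 * L * h) ≤ f0 - f1 := by
      have := hδq _ hβmem
      rw [hval] at this
      linarith
    have hG2' : G ^ 2 ≤ 2 * L * (f0 - f1) * D ^ 2 := by
      have h1 : G ^ 2 ≤ 2 * L * h * (f0 - f1) := by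
        rw [div_le_iff₀ (by positivity)] at hG2
        linarith
      nlinarith
    have : -G ≤ Real.sqrt (2 * L * (f0 - f1)) * D := by
      have e1 : -G = Real.sqrt ((-G) ^ 2) := (Real.sqrt_sq (by linarith)).symm
      have e2 : Real.sqrt (2 * L * (f0 - f1)) * D = Real.sqrt (2 * L * (f0 - f1) * D ^ 2) := by
        rw [Real.sqrt_mul hsqarg, Real.sqrt_sq hD0]
      rw [e1, e2]
      apply Real.sqrt_le_sqrt
      nlinarith
    linarith
  · have h1 : -(1 * G + L * 1 ^ 2 / 2 * h) ≤ f0 - f1 :=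
      hδq 1 (Set.mem_Icc.mpr ⟨zero_le_one, le_rfl⟩)
    have h1' : -G - L * h / 2 ≤ f0 - f1 := by nlinarith [h1]
    have hLh2 : L * h / 2 ≤ f0 - f1 := by linarith
    have hg2 : -G ≤ (f0 - f1) + L * h / 2 := by linarith
    have h3 : L * h / 2 ≤ Real.sqrt (2 * L * (f0 - f1)) * D := by
      have e1 : L * h / 2 = Real.sqrt ((L * h / 2) ^ 2) := (Real.sqrt_sq (by positivity)).symm
      have e2 : Real.sqrt (2 * L * (f0 - f1)) * D = Real.sqrt (2 * L * (f0 - f1) * D ^ 2) := by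
        rw [Real.sqrt_mul hsqarg, Real.sqrt_sq hD0]
      rw [e1, e2]
      apply Real.sqrt_le_sqrt
      have hb : L * h / 2 ≤ L * D ^ 2 / 2 := by nlinarith
      nlinarith [mul_le_mul hLh2 hb (by positivity) hδ0]
    linarith
theorem stmt11 {d : ℕ} (M : ℕ) (hM : 1 ≤ M)
    (v : ℕ → EuclideanSpace ℝ (Fin d))
    (S : Set (EuclideanSpace ℝ (Fin d)))
    (hSdef : S = convexHull ℝ (v '' Set.Icc 1 M))
    (D L : ℝ) (hL : 0 < L) (hD : ∀ a ∈ S, ∀ b ∈ S, ‖a - b‖ ≤ D)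
    (f : EuclideanSpace ℝ (Fin d) → ℝ)
    (g : EuclideanSpace ℝ (Fin d) → EuclideanSpace ℝ (Fin d))
    (hconv : ConvexOn ℝ S f)
    (hgrad : ∀ y ∈ S, HasGradientAt f (g y) y)
    (hlip : ∀ a ∈ S, ∀ b ∈ S, ‖g a - g b‖ ≤ L * ‖a - b‖)
    (xstar : EuclideanSpace ℝ (Fin d)) (hxs : xstar ∈ S)
    (hmin : ∀ y ∈ S, f xstar ≤ f y)
    (x : ℕ → EuclideanSpace ℝ (Fin d)) (hx0 : x 0 ∈ S)
    (α : ℕ → ℝ)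
    (hstep : ∀ k, 1 ≤ k → k ≤ M →
      α k ∈ Set.Icc (0 : ℝ) 1 ∧
      x k = x (k - 1) + α k • (v k - x (k - 1)) ∧
      ∀ β ∈ Set.Icc (0 : ℝ) 1,
        α k * ⟪g (x (k - 1)), v k - x (k - 1)⟫ +
          L * (α k) ^ 2 / 2 * ‖v k - x (k - 1)‖ ^ 2 ≤
        β * ⟪g (x (k - 1)), v k - x (k - 1)⟫ +
          L * β ^ 2 / 2 * ‖v k - x (k - 1)‖ ^ 2) :
    (f (x M) - f xstar) ^ 2 ≤ 8 * M * L * D ^ 2 * (f (x 0) - f (x M)) := by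
  have hSconv : Convex ℝ S := hSdef ▸ convex_convexHull ℝ _
  have hD0 : 0 ≤ D := le_trans (norm_nonneg _) (hD (x 0) hx0 (x 0) hx0)
  have hvS : ∀ k, 1 ≤ k → k ≤ M → v k ∈ S := fun k h1 h2 =>
    hSdef ▸ subset_convexHull ℝ _ ⟨k, ⟨h1, h2⟩, rfl⟩
  have hxS : ∀ k, k ≤ M → x k ∈ S := by
    intro k
    induction k with
    | zero => intro _; exact hx0
    | succ n ih =>
      intro hn
      obtain ⟨hα, hxk, -⟩ := hstep (n+1) (by omega) hn
      rw [Nat.add_sub_cancel] at hxk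
      rw [hxk]
      exact hSconv.add_smul_sub_mem (ih (by omega)) (hvS (n+1) (by omega) hn) hα
  -- processed per-step facts
  have hstep' : ∀ n, n < M →
      f (x (n+1)) ≤ f (x n) ∧
      L / 2 * ‖x (n+1) - x n‖ ^ 2 ≤ f (x n) - f (x (n+1)) ∧
      ⟪g (x n), x n - v (n+1)⟫ ≤ (f (x n) - f (x (n+1)))
        + Real.sqrt (2 * L * (f (x n) - f (x (n+1)))) * D := by
    intro n hn
    obtain ⟨hα, hxk, hopt⟩ := hstep (n+1) (by omega) hn
    rw [Nat.add_sub_cancel] at hxk hopt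
    have hxnS := hxS n (by omega)
    have hxn1S := hxS (n+1) hn
    have hvkS := hvS (n+1) (by omega) hn
    have hdiff : x (n+1) - x n = α (n+1) • (v (n+1) - x n) := by rw [hxk]; abel
    have hnorm : ‖x (n+1) - x n‖ ^ 2 = α (n+1) ^ 2 * ‖v (n+1) - x n‖ ^ 2 := by
      rw [hdiff, norm_smul, mul_pow, Real.norm_eq_abs, sq_abs]
    have hinner : ⟪g (x n), x (n+1) - x n⟫ = α (n+1) * ⟪g (x n), v (n+1) - x n⟫ := by
      rw [hdiff, real_inner_smul_right]
    have hdesc : f (x (n+1)) ≤ f (x n) + α (n+1) * ⟪g (x n), v (n+1) - x n⟫ +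
        L / 2 * (α (n+1) ^ 2 * ‖v (n+1) - x n‖ ^ 2) := by
      have hd := descent_lem' hSconv (le_of_lt hL) hgrad hlip hxnS hxn1S
      rw [hinner, hnorm] at hd
      linarith [hd]
    have hhD : ‖v (n+1) - x n‖ ^ 2 ≤ D ^ 2 := by
      have := hD (v (n+1)) hvkS (x n) hxnS
      nlinarith [norm_nonneg (v (n+1) - x n)]
    have hG0 : ‖v (n+1) - x n‖ ^ 2 = 0 → ⟪g (x n), v (n+1) - x n⟫ = 0 := by
      intro h0
      have : v (n+1) - x n = 0 := by
        rwa [pow_eq_zero_iff (by norm_num : (2:ℕ) ≠ 0), norm_eq_zero] at h0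
      rw [this, inner_zero_right]
    have hfacts := quad_facts' hL hD0 (by positivity) hhD hG0 hα hopt hdesc
    refine ⟨hfacts.1, ?_, ?_⟩
    · rw [hnorm]; exact hfacts.2.1
    · have e : x n - v (n+1) = -(v (n+1) - x n) := by abel
      rw [e, inner_neg_right]
      exact hfacts.2.2
  -- monotonicity
  have hmono : ∀ j, j ≤ M → ∀ i, i ≤ j → f (x j) ≤ f (x i) := by
    intro j
    induction j with
    | zero => intro _ i hi; rw [Nat.le_zero.1 hi]
    | succ n ih =>
      intro hn i hi
      rcases Nat.lt_succ_iff_lt_or_eq.mp (Nat.lt_succ_of_le hi) with h | h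
      · exact le_trans (hstep' n (by omega)).1 (ih (by omega) i (by omega))
      · rw [h]
  have hΔ0 : 0 ≤ f (x 0) - f (x M) := sub_nonneg.2 (hmono M le_rfl 0 (Nat.zero_le M))
  -- path length bound
  have hpath : ∀ j i, i + j ≤ M → ‖x (i+j) - x i‖ ≤
      Real.sqrt ((j:ℝ) * (2 / L * (f (x i) - f (x (i+j))))) := by
    intro j
    induction j with
    | zero =>
      intro i _
      simp only [Nat.add_zero, sub_self, norm_zero]
      exact Real.sqrt_nonneg _
    | succ n ih =>
      intro i hi
      have hiM : i < M := by omega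
      have hd1 : 0 ≤ f (x i) - f (x (i+1)) := by
        have := (hstep' i hiM).1; linarith
      have hnc : ‖x (i+1) - x i‖ ≤ Real.sqrt (2 / L * (f (x i) - f (x (i+1)))) := by
        have hsf := (hstep' i hiM).2.1
        rw [Real.le_sqrt (norm_nonneg _) (by positivity)]
        rw [show (2:ℝ) / L * (f (x i) - f (x (i+1))) = 2 * (f (x i) - f (x (i+1))) / L by ring,
          le_div_iff₀ hL]
        nlinarith [hsf]
      have e : i + (n+1) = (i+1) + n := by omega
      rw [e]
      have hA0 : 0 ≤ f (x (i+1)) - f (x ((i+1)+n)) := by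
        have := hmono ((i+1)+n) (by omega) (i+1) (by omega); linarith
      calc ‖x ((i+1)+n) - x i‖
          ≤ ‖x ((i+1)+n) - x (i+1)‖ + ‖x (i+1) - x i‖ := by
            have := norm_add_le (x ((i+1)+n) - x (i+1)) (x (i+1) - x i)
            rwa [sub_add_sub_cancel] at this
        _ ≤ Real.sqrt ((n:ℝ) * (2 / L * (f (x (i+1)) - f (x ((i+1)+n)))))
            + Real.sqrt (2 / L * (f (x i) - f (x (i+1)))) :=
            add_le_add (ih (i+1) (by omega)) hnc
        _ ≤ Real.sqrt (((n:ℝ)+1) * ((2 / L * (f (x (i+1)) - f (x ((i+1)+n))))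
            + (2 / L * (f (x i) - f (x (i+1)))))) :=
            sqrt_step' (by positivity) (by positivity) (by positivity)
        _ = Real.sqrt (((n+1:ℕ):ℝ) * (2 / L * (f (x i) - f (x ((i+1)+n))))) := by
            congr 1
            push_cast
            ring
  -- key vertex bound
  have hMS := hxS M le_rfl
  have key : ∀ k, 1 ≤ k → k ≤ M → ⟪g (x M), x M - v k⟫ ≤
      Real.sqrt (2*L) * Real.sqrt (f (x 0) - f (x M)) * D
      + Real.sqrt (2*(M:ℝ)*L) * Real.sqrt (f (x 0) - f (x M)) * D := by
    intro k hk1 hkM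
    obtain ⟨n, rfl⟩ : ∃ n, k = n + 1 := ⟨k - 1, by omega⟩
    have hnM : n < M := by omega
    have hxnS := hxS n (by omega)
    have hvkS := hvS (n+1) hk1 hkM
    have hsplit : ⟪g (x M), x M - v (n+1)⟫ =
        ⟪g (x n), x n - v (n+1)⟫ + ⟪g (x M) - g (x n), x M - v (n+1)⟫
          + ⟪g (x n), x M - x n⟫ := by
      simp only [inner_sub_left, inner_sub_right]
      ring
    have ht3 : ⟪g (x n), x M - x n⟫ ≤ f (x M) - f (x n) := by
      have := grad_ineq' hconv hxnS hMS (hgrad (x n) hxnS)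
      linarith
    have ht1 := (hstep' n hnM).2.2
    have hm1 : f (x n) - f (x (n+1)) ≤ f (x 0) - f (x M) := by
      have h1 := hmono n (by omega) 0 (Nat.zero_le n)
      have h2 := hmono M le_rfl (n+1) hkM
      linarith
    have hδn0 : 0 ≤ f (x n) - f (x (n+1)) := by
      have := (hstep' n hnM).1; linarith
    have hs1 : Real.sqrt (2*L*(f (x n) - f (x (n+1))))
        ≤ Real.sqrt (2*L) * Real.sqrt (f (x 0) - f (x M)) := by
      rw [← Real.sqrt_mul (by positivity)]
      apply Real.sqrt_le_sqrt
      nlinarith [hm1, hL]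
    have ht2 : ⟪g (x M) - g (x n), x M - v (n+1)⟫
        ≤ Real.sqrt (2*(M:ℝ)*L) * Real.sqrt (f (x 0) - f (x M)) * D := by
      have hMn := hpath (M - n) n (by omega)
      rw [show n + (M - n) = M by omega] at hMn
      have h2 : ‖x M - x n‖ ≤ Real.sqrt ((M:ℝ) * (2 / L * (f (x 0) - f (x M)))) := by
        refine le_trans hMn (Real.sqrt_le_sqrt ?_)
        have c1 : ((M - n : ℕ):ℝ) ≤ (M:ℝ) := by exact_mod_cast Nat.sub_le M n
        have c2 : f (x n) - f (x M) ≤ f (x 0) - f (x M) := by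
          have := hmono n (by omega) 0 (Nat.zero_le n); linarith
        have c3 : 0 ≤ f (x n) - f (x M) := by
          have := hmono M le_rfl n (by omega); linarith
        have h2L : (0:ℝ) ≤ 2 / L := by positivity
        nlinarith [mul_le_mul c1 (mul_le_mul_of_nonneg_left c2 h2L)
          (mul_nonneg h2L c3) (by positivity : (0:ℝ) ≤ (M:ℝ))]
      have h3 : L * Real.sqrt ((M:ℝ) * (2 / L * (f (x 0) - f (x M))))
          ≤ Real.sqrt (2*(M:ℝ)*L) * Real.sqrt (f (x 0) - f (x M)) := by
        have e1 : L * Real.sqrt ((M:ℝ) * (2 / L * (f (x 0) - f (x M))))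
            = Real.sqrt (L^2 * ((M:ℝ) * (2 / L * (f (x 0) - f (x M))))) := by
          rw [Real.sqrt_mul (sq_nonneg L), Real.sqrt_sq (le_of_lt hL)]
        have e2 : L^2 * ((M:ℝ) * (2 / L * (f (x 0) - f (x M))))
            = 2*(M:ℝ)*L * (f (x 0) - f (x M)) := by
          field_simp
        rw [e1, e2, Real.sqrt_mul (by positivity)]
      calc ⟪g (x M) - g (x n), x M - v (n+1)⟫
          ≤ ‖g (x M) - g (x n)‖ * ‖x M - v (n+1)‖ := real_inner_le_norm _ _
        _ ≤ (L * ‖x M - x n‖) * D := by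
            apply mul_le_mul (hlip _ hMS _ hxnS) (hD _ hMS _ hvkS) (norm_nonneg _)
            positivity
        _ ≤ (L * Real.sqrt ((M:ℝ) * (2 / L * (f (x 0) - f (x M))))) * D := by
            apply mul_le_mul_of_nonneg_right _ hD0
            exact mul_le_mul_of_nonneg_left h2 (le_of_lt hL)
        _ ≤ Real.sqrt (2*(M:ℝ)*L) * Real.sqrt (f (x 0) - f (x M)) * D :=
            mul_le_mul_of_nonneg_right h3 hD0
    have hend : f (x M) ≤ f (x (n+1)) := hmono M le_rfl (n+1) hkM
    have ht1' : ⟪g (x n), x n - v (n+1)⟫ ≤ (f (x n) - f (x (n+1)))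
        + Real.sqrt (2*L) * Real.sqrt (f (x 0) - f (x M)) * D := by
      have := mul_le_mul_of_nonneg_right hs1 hD0
      linarith [ht1]
    rw [hsplit]
    linarith [ht1', ht2, ht3, hend]
  -- convex hull argument
  have hxstar : ⟪g (x M), x M - xstar⟫ ≤
      Real.sqrt (2*L) * Real.sqrt (f (x 0) - f (x M)) * D
      + Real.sqrt (2*(M:ℝ)*L) * Real.sqrt (f (x 0) - f (x M)) * D := by
    set B := Real.sqrt (2*L) * Real.sqrt (f (x 0) - f (x M)) * D
      + Real.sqrt (2*(M:ℝ)*L) * Real.sqrt (f (x 0) - f (x M)) * D with hBdef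
    have hsub : convexHull ℝ (v '' Set.Icc 1 M) ⊆ {y | ⟪g (x M), x M - y⟫ ≤ B} := by
      apply convexHull_min
      · rintro _ ⟨k, ⟨hk1, hkM⟩, rfl⟩
        exact key k hk1 hkM
      · intro y hy z hz a b ha hb hab
        simp only [Set.mem_setOf_eq] at hy hz ⊢
        have hexp : ⟪g (x M), x M - (a • y + b • z)⟫
            = a * ⟪g (x M), x M - y⟫ + b * ⟪g (x M), x M - z⟫ := by
          simp only [inner_sub_right, inner_add_right, real_inner_smul_right]
          linear_combination (⟪g (x M), x M⟫ : ℝ) * hab.symm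
        rw [hexp]
        have hsum : a * B + b * B = B := by rw [← add_mul, hab, one_mul]
        linarith [mul_le_mul_of_nonneg_left hy ha, mul_le_mul_of_nonneg_left hz hb]
    exact hsub (hSdef ▸ hxs)
  have hgradM := hgrad (x M) hMS
  have hF : f (x M) - f xstar ≤
      Real.sqrt (2*L) * Real.sqrt (f (x 0) - f (x M)) * D
      + Real.sqrt (2*(M:ℝ)*L) * Real.sqrt (f (x 0) - f (x M)) * D := by
    have h1 := grad_ineq' hconv hMS hxs hgradM
    have h2 : ⟪g (x M), xstar - x M⟫ = -⟪g (x M), x M - xstar⟫ := by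
      rw [show xstar - x M = -(x M - xstar) by abel, inner_neg_right]
    rw [h2] at h1
    linarith [hxstar]
  have hF0 : 0 ≤ f (x M) - f xstar := sub_nonneg.2 (hmin _ hMS)
  -- final computation
  have hM1 : (1:ℝ) ≤ (M:ℝ) := by exact_mod_cast hM
  have s2 : Real.sqrt (2*(M:ℝ)*L) ^ 2 = 2*(M:ℝ)*L := Real.sq_sqrt (by positivity)
  have s3 : Real.sqrt (f (x 0) - f (x M)) ^ 2 = f (x 0) - f (x M) := Real.sq_sqrt hΔ0
  have s4 : Real.sqrt (2*L) ≤ Real.sqrt (2*(M:ℝ)*L) := Real.sqrt_le_sqrt (by nlinarith)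
  have hstep1 : Real.sqrt (2*L) * Real.sqrt (f (x 0) - f (x M)) * D
      + Real.sqrt (2*(M:ℝ)*L) * Real.sqrt (f (x 0) - f (x M)) * D
      ≤ 2 * (Real.sqrt (2*(M:ℝ)*L) * Real.sqrt (f (x 0) - f (x M)) * D) := by
    have := mul_le_mul_of_nonneg_right
      (mul_le_mul_of_nonneg_right s4 (Real.sqrt_nonneg (f (x 0) - f (x M)))) hD0
    linarith
  have hfinal : (f (x M) - f xstar) ^ 2
      ≤ (2 * (Real.sqrt (2*(M:ℝ)*L) * Real.sqrt (f (x 0) - f (x M)) * D)) ^ 2 := by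
    apply pow_le_pow_left₀ hF0 (le_trans hF hstep1)
  calc (f (x M) - f xstar) ^ 2
      ≤ (2 * (Real.sqrt (2*(M:ℝ)*L) * Real.sqrt (f (x 0) - f (x M)) * D)) ^ 2 := hfinal
    _ = 4 * (Real.sqrt (2*(M:ℝ)*L) ^ 2) * (Real.sqrt (f (x 0) - f (x M)) ^ 2) * D ^ 2 := by
        ring
    _ = 8 * M * L * D ^ 2 * (f (x 0) - f (x M)) := by
        rw [s2, s3]; ring
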